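/- Let X be a normed space, F ⊆ X a bounded convex set with 0 ∈ int(F), and Ω ⊆ X nonempty. Then T_Ω^F is Lipschitz continuous on X with constant ‖F°‖ := sup{‖x*‖ | x* ∈ F°}, where F° := {x* ∈ X* | ⟨x*, x⟩ ≤ 1 for all x ∈ F} is the polar of F. -/

import Mathlib

open Set Filter Topology Pointwise

/-- The set of admissible times in the definition of the minimal time function. -/
def timeSet {X : Type*} [AddCommGroup X] [Module ℝ X] (F Ω : Set X) (x : X) : Set ℝ :=
  {t : ℝ | 0 < t ∧ ∃ f ∈ F, x + t • f ∈ Ω}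

/-- The minimal time function with target Ω and constant dynamics F. -/
noncomputable def minTime {X : Type*} [AddCommGroup X] [Module ℝ X] (F Ω : Set X) (x : X) : ℝ :=
  sInf (timeSet F Ω x)

theorem aux_minTime_le {X : Type*} [NormedAddCommGroup X] [NormedSpace ℝ X]
    (F Ω : Set X) (hconv : Convex ℝ F) (h0 : (0 : X) ∈ interior F) (hΩ : Ω.Nonempty)
    (x y : X) :
    minTime F Ω x ≤ minTime F Ω y +
      sSup {c : ℝ | ∃ x' : X →L[ℝ] ℝ, (∀ f ∈ F, x' f ≤ 1) ∧ c = ‖x'‖} * ‖x - y‖ := by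
  set S : Set ℝ := {c : ℝ | ∃ x' : X →L[ℝ] ℝ, (∀ f ∈ F, x' f ≤ 1) ∧ c = ‖x'‖} with hS
  obtain ⟨r, hr, hball⟩ := Metric.mem_nhds_iff.mp (mem_interior_iff_mem_nhds.mp h0)
  have h0F : (0 : X) ∈ F := interior_subset h0
  -- S is bounded above
  have hSbdd : BddAbove S := by
    refine ⟨1 / r, fun c hc => ?_⟩
    obtain ⟨x', hx', rfl⟩ := hc
    have habs : ∀ u : X, |x' u| ≤ ‖u‖ / r := by
      intro u
      have key : ∀ v : X, ‖v‖ < r → |x' v| ≤ 1 := by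
        intro v hv
        have h1 : x' v ≤ 1 := hx' v (hball (by simpa [Metric.mem_ball] using hv))
        have h2 : x' (-v) ≤ 1 := hx' (-v) (hball (by simpa [Metric.mem_ball] using hv))
        rw [map_neg] at h2
        exact abs_le.mpr ⟨by linarith, h1⟩
      refine le_of_forall_pos_le_add fun ε hε => ?_
      have hd : 0 < ‖u‖ + r * ε := by positivity
      have hv : ‖(r / (‖u‖ + r * ε)) • u‖ < r := by
        rw [norm_smul, Real.norm_eq_abs, abs_of_pos (by positivity)]
        rw [div_mul_eq_mul_div, div_lt_iff₀ hd]
        nlinarith [norm_nonneg u, mul_pos (mul_pos hr hr) hε]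
      have hk := key _ hv
      rw [map_smul, smul_eq_mul, abs_mul,
        abs_of_pos (by positivity : (0:ℝ) < r / (‖u‖ + r * ε))] at hk
      have h3 : |x' u| ≤ (‖u‖ + r * ε) / r := by
        rw [div_mul_eq_mul_div, div_le_one hd, mul_comm] at hk
        rw [le_div_iff₀ hr]
        linarith
      calc |x' u| ≤ (‖u‖ + r * ε) / r := h3
        _ = ‖u‖ / r + ε := by field_simp
    refine ContinuousLinearMap.opNorm_le_bound _ (by positivity) fun u => ?_
    have h := habs u
    rw [div_eq_mul_inv, mul_comm] at h
    simpa [Real.norm_eq_abs, one_div] using h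
  have hS0 : (0 : ℝ) ∈ S := ⟨0, fun f _ => by simp, by simp⟩
  set K : ℝ := sSup S with hKdef
  have hK0 : 0 ≤ K := le_csSup hSbdd hS0
  have hnormK : ∀ x' : X →L[ℝ] ℝ, (∀ f ∈ F, x' f ≤ 1) → ‖x'‖ ≤ K :=
    fun x' h => le_csSup hSbdd ⟨x', h, rfl⟩
  -- timeSet facts
  have hTne : ∀ z : X, (timeSet F Ω z).Nonempty := by
    intro z
    obtain ⟨ω, hω⟩ := hΩ
    have hT : (0:ℝ) < ‖ω - z‖ / r + 1 := by positivity
    refine ⟨‖ω - z‖ / r + 1, hT, (‖ω - z‖ / r + 1)⁻¹ • (ω - z), ?_, ?_⟩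
    · apply hball
      rw [Metric.mem_ball, dist_zero_right, norm_smul, Real.norm_eq_abs,
        abs_of_pos (by positivity)]
      rw [inv_mul_eq_div, div_lt_iff₀ hT]
      have heq : r * (‖ω - z‖ / r + 1) = ‖ω - z‖ + r := by field_simp
      rw [heq]
      linarith
    · rw [smul_inv_smul₀ hT.ne']
      simpa using hω
  have hTbdd : ∀ z : X, BddBelow (timeSet F Ω z) :=
    fun z => ⟨0, fun t ht => ht.1.le⟩
  -- main estimate
  have main : minTime F Ω x - minTime F Ω y ≤ K * ‖x - y‖ := by
    refine le_of_forall_gt_imp_ge_of_dense fun c hc => ?_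
    have hKn : 0 ≤ K * ‖x - y‖ := by positivity
    have hcpos : 0 < c := lt_of_le_of_lt hKn hc
    set c' : ℝ := (K * ‖x - y‖ + c) / 2 with hc'def
    have hc'1 : K * ‖x - y‖ < c' := by rw [hc'def]; linarith
    have hc'2 : c' < c := by rw [hc'def]; linarith
    have hc'pos : 0 < c' := lt_of_le_of_lt hKn hc'1
    -- claim A : y - x ∈ c' • closure F
    have claimA : y - x ∈ c' • closure F := by
      by_contra hA
      have hclosed : IsClosed (c' • closure F) := isClosed_closure.smul_of_ne_zero hc'pos.ne'
      have hcvx : Convex ℝ (c' • closure F) := (hconv.closure).smul _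
      obtain ⟨g, α, hga, hgu⟩ := geometric_hahn_banach_closed_point hcvx hclosed hA
      have h0mem : (0 : X) ∈ c' • closure F := ⟨0, subset_closure h0F, smul_zero _⟩
      have hα : 0 < α := by have := hga 0 h0mem; simpa using this
      set x' : X →L[ℝ] ℝ := (c' / α) • g with hx'def
      have hx'F : ∀ f ∈ F, x' f ≤ 1 := by
        intro f hf
        have h1 : g (c' • f) < α := hga _ ⟨f, subset_closure hf, rfl⟩
        rw [map_smul, smul_eq_mul] at h1
        have h2 : c' / α * g f < 1 := by
          rw [div_mul_eq_mul_div, div_lt_one hα]; linarith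
        simpa [hx'def] using h2.le
      have hb : x' (y - x) ≤ ‖x'‖ * ‖y - x‖ :=
        le_trans (le_abs_self _) (x'.le_opNorm _)
      have hxu : c' < x' (y - x) := by
        have h3 : c' / α * α < c' / α * g (y - x) :=
          mul_lt_mul_of_pos_left hgu (by positivity)
        rw [div_mul_cancel₀ _ hα.ne'] at h3
        simpa [hx'def] using h3
      have h4 : ‖x'‖ * ‖y - x‖ ≤ K * ‖x - y‖ := by
        rw [norm_sub_rev y x]
        exact mul_le_mul_of_nonneg_right (hnormK x' hx'F) (norm_nonneg _)
      linarith
    -- claim B : y - x ∈ c • F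
    have claimB : ∃ g ∈ F, y - x = c • g := by
      obtain ⟨v, hv, hvx⟩ := Set.mem_smul_set.mp claimA
      have hlt : c' / c < 1 := (div_lt_one hcpos).mpr hc'2
      have hmem : (c' / c) • v ∈ interior F := by
        have := hconv.combo_interior_closure_mem_interior h0 hv
          (a := 1 - c' / c) (b := c' / c) (by linarith) (by positivity) (by ring)
        simpa using this
      refine ⟨(c' / c) • v, interior_subset hmem, ?_⟩
      rw [smul_smul, show c * (c' / c) = c' by field_simp, hvx]
    obtain ⟨g, hgF, hgeq⟩ := claimB
    -- conclude
    have key : minTime F Ω x - c ≤ minTime F Ω y := by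
      refine le_csInf (hTne y) fun t ht => ?_
      obtain ⟨htpos, f, hfF, hfΩ⟩ := ht
      have htc : (0:ℝ) < t + c := by linarith
      have hmemx : t + c ∈ timeSet F Ω x := by
        refine ⟨htc, (c / (t + c)) • g + (t / (t + c)) • f,
          hconv hgF hfF (div_nonneg hcpos.le htc.le) (div_nonneg htpos.le htc.le)
            (by rw [← add_div, add_comm, div_self htc.ne']), ?_⟩
        have hcomb : (t + c) • ((c / (t + c)) • g + (t / (t + c)) • f) = c • g + t • f := by
          rw [smul_add, smul_smul, smul_smul, show (t + c) * (c / (t + c)) = c by field_simp,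
            show (t + c) * (t / (t + c)) = t by field_simp]
        rw [hcomb, show x + (c • g + t • f) = y + t • f by rw [← hgeq]; abel]
        exact hfΩ
      have h1 : minTime F Ω x ≤ t + c := csInf_le (hTbdd x) hmemx
      linarith
    linarith
  linarith


/-- In a normed space with bounded convex dynamics F, the minimal time function is
Lipschitz continuous with constant ‖F°‖, the supremum of the norms of elements of
the polar of F. -/
theorem minTime_lipschitz {X : Type*} [NormedAddCommGroup X] [NormedSpace ℝ X]
    (F Ω : Set X) (hconv : Convex ℝ F) (h0 : (0 : X) ∈ interior F)
    (hFbd : Bornology.IsBounded F) (hΩ : Ω.Nonempty) :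
    ∀ x y : X, |minTime F Ω x - minTime F Ω y| ≤
      sSup {c : ℝ | ∃ x' : X →L[ℝ] ℝ, (∀ f ∈ F, x' f ≤ 1) ∧ c = ‖x'‖} * ‖x - y‖ := by
  intro x y
  rw [abs_sub_le_iff]
  constructor
  · have := aux_minTime_le F Ω hconv h0 hΩ x y
    linarith
  · have := aux_minTime_le F Ω hconv h0 hΩ y x
    rw [norm_sub_rev y x] at this
    linarith
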